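/- Let V ∈ C²((α₀,∞)) with V(u) → h* and V'(u) → -∞ as u → α₀⁺, V(0) = V'(0) = 0, V''(0) > 0 and uV'(u) > 0 for u ≠ 0. If u(t) is a solution of ü + V'(u) = 0 with energy h = ½u̇(0)² + V(u(0)) ≥ h* and u̇(0) = 0, then there exists t₀ > 0 such that u(t) → α₀ as t → t₀⁻ and as t → -t₀⁺, the one-sided limits u̇(t₀⁻) and u̇(-t₀⁺) exist and are finite, and u̇(t₀⁻) = -u̇(-t₀⁺). -/

import Mathlib

open Real Filter Set Topology

/-- A function with bounded derivative on `Ioo t1 b` has a limit from the left at `b`. -/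
lemma exists_tendsto_of_hasDerivAt_bound {g g' : ℝ → ℝ} {t1 b K : ℝ} (hlt : t1 < b)
    (hg : ∀ t ∈ Set.Ioo t1 b, HasDerivAt g (g' t) t)
    (hK : ∀ t ∈ Set.Ioo t1 b, |g' t| ≤ K) :
    ∃ L, Tendsto g (𝓝[<] b) (𝓝 L) := by
  have hK0 : 0 ≤ K := le_trans (abs_nonneg _) (hK ((t1+b)/2) ⟨by linarith, by linarith⟩)
  have hlip : ∀ x ∈ Set.Ioo t1 b, ∀ y ∈ Set.Ioo t1 b, |g y - g x| ≤ K * |y - x| := by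
    intro x hx y hy
    have := (convex_Ioo t1 b).norm_image_sub_le_of_norm_hasDerivWithin_le
      (f := g) (f' := g')
      (fun z hz => (hg z hz).hasDerivWithinAt) (fun z hz => by simpa using hK z hz) hx hy
    simpa [Real.norm_eq_abs] using this
  have hc : Cauchy (Filter.map g (𝓝[<] b)) := by
    rw [Metric.cauchy_iff]
    refine ⟨Filter.map_neBot, ?_⟩
    intro ε hε
    set δ := min (b - t1) (ε / (K+1)) with hδ
    have hδpos : 0 < δ := lt_min (by linarith) (by positivity)
    have hδ1 : δ ≤ b - t1 := min_le_left _ _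
    have hδ2 : δ ≤ ε / (K+1) := min_le_right _ _
    refine ⟨g '' Set.Ioo (b - δ) b, ?_, ?_⟩
    · apply image_mem_map
      exact Ioo_mem_nhdsLT_of_mem ⟨by linarith, le_refl b⟩
    · rintro _ ⟨x, hx, rfl⟩ _ ⟨y, hy, rfl⟩
      have hxI : x ∈ Set.Ioo t1 b := ⟨by cases hx; linarith, hx.2⟩
      have hyI : y ∈ Set.Ioo t1 b := ⟨by cases hy; linarith, hy.2⟩
      have h1 : |g x - g y| ≤ K * |x - y| := hlip y hyI x hxI
      have h2 : |x - y| < δ := by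
        rw [abs_lt]; cases hx; cases hy; constructor <;> linarith
      have : K * |x - y| < ε := by
        have : K * |x - y| ≤ K * δ := by nlinarith [abs_nonneg (x - y)]
        have hKδ : K * δ < ε := by
          have : K * δ ≤ K * (ε / (K+1)) := by nlinarith
          have h3 : K * (ε / (K+1)) < ε := by
            rw [mul_div_assoc']
            rw [div_lt_iff₀ (by linarith)]
            nlinarith
          linarith
        linarith
      calc dist (g x) (g y) = |g x - g y| := Real.dist_eq _ _
        _ ≤ K * |x - y| := h1
        _ < ε := this
  obtain ⟨L, hL⟩ := CompleteSpace.complete hc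
  exact ⟨L, hL⟩

/-- Uniqueness of solutions for a locally-Lipschitz (C¹ on an open set) autonomous ODE,
on a preconnected open set of times. -/
lemma ODE_eqOn_of_local {f : ℝ × ℝ → ℝ × ℝ} {Ω : Set (ℝ × ℝ)}
    (hf : ∀ p ∈ Ω, ContDiffAt ℝ 1 f p) {γ η : ℝ → ℝ × ℝ} {J : Set ℝ}
    (hJo : IsOpen J) (hJc : IsPreconnected J)
    (hγ : ∀ t ∈ J, HasDerivAt γ (f (γ t)) t ∧ γ t ∈ Ω)
    (hη : ∀ t ∈ J, HasDerivAt η (f (η t)) t ∧ η t ∈ Ω)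
    {t₀ : ℝ} (ht₀ : t₀ ∈ J) (heq : γ t₀ = η t₀) : Set.EqOn γ η J := by
  set O₁ := {t | t ∈ J ∧ γ t = η t} with hO₁def
  set O₂ := {t | t ∈ J ∧ γ t ≠ η t} with hO₂def
  have hO₁ : IsOpen O₁ := by
    rw [isOpen_iff_mem_nhds]
    rintro t ⟨htJ, hte⟩
    obtain ⟨K, s, hs, hlip⟩ := (hf (γ t) (hγ t htJ).2).exists_lipschitzOnWith
    have h1 : ∀ᶠ t' in 𝓝 t, t' ∈ J := hJo.mem_nhds htJ
    have h2 : ∀ᶠ t' in 𝓝 t, γ t' ∈ s := (hγ t htJ).1.continuousAt hs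
    have h3 : ∀ᶠ t' in 𝓝 t, η t' ∈ s := (hη t htJ).1.continuousAt (by rwa [← hte])
    have hev : γ =ᶠ[𝓝 t] η := by
      apply ODE_solution_unique_of_eventually (v := fun _ => f) (s := fun _ => s)
        (Filter.Eventually.of_forall fun _ => hlip) _ _ hte
      · exact (h1.and h2).mono fun t' ht' => ⟨(hγ t' ht'.1).1, ht'.2⟩
      · exact (h1.and h3).mono fun t' ht' => ⟨(hη t' ht'.1).1, ht'.2⟩
    exact (h1.and hev).mono fun t' ht' => ⟨ht'.1, ht'.2⟩
  have hO₂ : IsOpen O₂ := by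
    rw [isOpen_iff_mem_nhds]
    rintro t ⟨htJ, hte⟩
    have h1 : ∀ᶠ t' in 𝓝 t, t' ∈ J := hJo.mem_nhds htJ
    have hc : ContinuousAt (fun t' => γ t' - η t') t :=
      ((hγ t htJ).1.continuousAt.sub (hη t htJ).1.continuousAt)
    have h2 : ∀ᶠ t' in 𝓝 t, γ t' - η t' ≠ 0 := hc.eventually_ne (sub_ne_zero.mpr hte)
    exact (h1.and h2).mono fun t' ht' => ⟨ht'.1, sub_ne_zero.mp ht'.2⟩
  have hcover : J ⊆ O₁ ∪ O₂ := by
    intro t ht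
    by_cases h : γ t = η t
    · exact Or.inl ⟨ht, h⟩
    · exact Or.inr ⟨ht, h⟩
  have hdisj : J ∩ (O₁ ∩ O₂) = ∅ := by
    ext t; simp only [mem_inter_iff, mem_empty_iff_false, iff_false]
    rintro ⟨_, ⟨_, h1⟩, ⟨_, h2⟩⟩; exact h2 h1
  rcases isPreconnected_iff_subset_of_disjoint.mp hJc O₁ O₂ hO₁ hO₂ hcover hdisj with h | h
  · exact fun t ht => (h ht).2
  · exact absurd heq (h ht₀).2

theorem stmt8 (α₀ hstar : ℝ) (hα₀ : α₀ < 0) (hstar_pos : 0 < hstar)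
    (V : ℝ → ℝ) (hVsmooth : ContDiffOn ℝ 2 V (Set.Ioi α₀))
    (hVlim : Tendsto V (𝓝[>] α₀) (𝓝 hstar))
    (hV'lim : Tendsto (deriv V) (𝓝[>] α₀) atBot)
    (hV0 : V 0 = 0) (hV'0 : deriv V 0 = 0) (hV''0 : 0 < deriv (deriv V) 0)
    (hsign : ∀ u ∈ Set.Ioi α₀, u ≠ 0 → 0 < u * deriv V u)
    (a b : ℝ) (ha : a < 0) (hb : 0 < b)
    (u u' : ℝ → ℝ)
    (hsol : ∀ t ∈ Set.Ioo a b,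
      α₀ < u t ∧ HasDerivAt u (u' t) t ∧ HasDerivAt u' (-(deriv V (u t))) t)
    (hmax : ∀ (c d : ℝ) (v v' : ℝ → ℝ), c ≤ a → b ≤ d →
      (∀ t ∈ Set.Ioo c d,
        α₀ < v t ∧ HasDerivAt v (v' t) t ∧ HasDerivAt v' (-(deriv V (v t))) t) →
      (∀ t ∈ Set.Ioo a b, v t = u t) → c = a ∧ d = b)
    (hinit : u' 0 = 0)
    (henergy : hstar ≤ (1/2) * (u' 0) ^ 2 + V (u 0)) :
    ∃ t₀ : ℝ, 0 < t₀ ∧ b = t₀ ∧ a = -t₀ ∧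
      Tendsto u (𝓝[<] t₀) (𝓝 α₀) ∧ Tendsto u (𝓝[>] (-t₀)) (𝓝 α₀) ∧
      ∃ v₁ : ℝ, Tendsto u' (𝓝[<] t₀) (𝓝 v₁) ∧ Tendsto u' (𝓝[>] (-t₀)) (𝓝 (-v₁)) := by
  -- Basic differentiability facts about V
  have hVdiffAt : ∀ x, α₀ < x → HasDerivAt V (deriv V x) x := fun x hx =>
    ((hVsmooth.differentiableOn (by norm_num)).differentiableAt
      (Ioi_mem_nhds hx)).hasDerivAt
  have hV'c1 : ContDiffOn ℝ 1 (deriv V) (Set.Ioi α₀) := by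
    exact hVsmooth.deriv_of_isOpen (m := 1) isOpen_Ioi (by norm_num)
  have hV'cont : ∀ x, α₀ < x → ContinuousAt (deriv V) x := fun x hx =>
    hV'c1.continuousOn.continuousAt (Ioi_mem_nhds hx)
  -- sign of V'
  have hV'pos : ∀ x : ℝ, 0 < x → 0 < deriv V x := by
    intro x hx
    have := hsign x (by simp; linarith) (ne_of_gt hx)
    nlinarith
  have hV'neg : ∀ x : ℝ, α₀ < x → x < 0 → deriv V x < 0 := by
    intro x hx hx0
    have := hsign x hx (ne_of_lt hx0)
    nlinarith
  -- V is nonnegative on (α₀, ∞)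
  have hVcontAt : ∀ x, α₀ < x → ContinuousAt V x := fun x hx => (hVdiffAt x hx).continuousAt
  have hVnonneg : ∀ x, α₀ < x → 0 ≤ V x := by
    intro x hx
    rcases lt_trichotomy x 0 with hx0 | hx0 | hx0
    · have hanti : StrictAntiOn V (Set.Icc x 0) := by
        apply strictAntiOn_of_deriv_neg (convex_Icc x 0)
        · exact fun s hs => (hVcontAt s (lt_of_lt_of_le hx hs.1)).continuousWithinAt
        · intro s hs
          rw [interior_Icc] at hs
          exact hV'neg s (lt_trans hx hs.1) hs.2
      have := hanti (left_mem_Icc.mpr (le_of_lt hx0)) (right_mem_Icc.mpr (le_of_lt hx0)) hx0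
      rw [hV0] at this; linarith
    · rw [hx0, hV0]
    · have hmono : StrictMonoOn V (Set.Icc 0 x) := by
        apply strictMonoOn_of_deriv_pos (convex_Icc 0 x)
        · exact fun s hs => (hVcontAt s (lt_of_lt_of_le hα₀ hs.1)).continuousWithinAt
        · intro s hs
          rw [interior_Icc] at hs
          exact hV'pos s hs.1
      have := hmono (left_mem_Icc.mpr (le_of_lt hx0)) (right_mem_Icc.mpr (le_of_lt hx0)) hx0
      rw [hV0] at this; linarith
  -- energy conservation
  have hmem0 : (0:ℝ) ∈ Set.Ioo a b := ⟨ha, hb⟩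
  set E : ℝ → ℝ := fun s => (1/2) * (u' s)^2 + V (u s) with hEdef
  obtain ⟨h, hhdef⟩ : ∃ h : ℝ, h = (1/2) * (u' 0)^2 + V (u 0) := ⟨_, rfl⟩
  have hh : hstar ≤ h := hhdef ▸ henergy
  have hEderiv : ∀ t ∈ Set.Ioo a b, HasDerivAt E 0 t := by
    intro t ht
    have hu := (hsol t ht).2.1
    have hu2 := (hsol t ht).2.2
    have hVat : HasDerivAt V (deriv V (u t)) (u t) := hVdiffAt (u t) (hsol t ht).1
    have h1 : HasDerivAt (fun s => (1/2) * (u' s)^2)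
        ((1/2) * (((2:ℕ) : ℝ) * (u' t)^(2-1) * (-(deriv V (u t))))) t := (hu2.pow 2).const_mul _
    have h2 : HasDerivAt (fun s => V (u s)) (deriv V (u t) * u' t) t := hVat.comp t hu
    refine (h1.add h2).congr_deriv ?_
    push_cast; ring
  have hEconst : ∀ t ∈ Set.Ioo a b, E t = h := by
    intro t ht
    rcases le_total t 0 with h0 | h0
    · have key := constant_of_has_deriv_right_zero (f := E) (a := t) (b := 0)
        (fun s hs => (hEderiv s ⟨lt_of_lt_of_le ht.1 hs.1, lt_of_le_of_lt hs.2 hb⟩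
          ).continuousAt.continuousWithinAt)
        (fun s hs => (hEderiv s ⟨lt_of_lt_of_le ht.1 hs.1, lt_trans hs.2 hb⟩
          ).hasDerivWithinAt)
      have h2 := key 0 ⟨h0, le_refl 0⟩
      rw [← h2, hhdef]
    · have key := constant_of_has_deriv_right_zero (f := E) (a := 0) (b := t)
        (fun s hs => (hEderiv s ⟨lt_of_lt_of_le ha hs.1, lt_of_le_of_lt hs.2 ht.2⟩
          ).continuousAt.continuousWithinAt)
        (fun s hs => (hEderiv s ⟨lt_of_lt_of_le ha hs.1, lt_trans hs.2 ht.2⟩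
          ).hasDerivWithinAt)
      have h2 := key t ⟨h0, le_refl t⟩
      rw [h2, hhdef]
  have hu'sq : ∀ t ∈ Set.Ioo a b, (u' t)^2 = 2*(h - V (u t)) := by
    intro t ht
    have h2 := hEconst t ht
    simp only [hEdef] at h2
    linarith
  -- bound on u'
  have hu'bd : ∀ t ∈ Set.Ioo a b, |u' t| ≤ Real.sqrt (2*h) := by
    intro t ht
    have h1 := hu'sq t ht
    have h2 := hVnonneg (u t) (hsol t ht).1
    rw [← Real.sqrt_sq_eq_abs]
    apply Real.sqrt_le_sqrt
    nlinarith
  -- limit of u at b from the left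
  obtain ⟨L, hL⟩ : ∃ L, Tendsto u (𝓝[<] b) (𝓝 L) :=
    exists_tendsto_of_hasDerivAt_bound hb (g' := u')
      (fun t ht => (hsol t ⟨lt_trans ha ht.1, ht.2⟩).2.1)
      (fun t ht => hu'bd t ⟨lt_trans ha ht.1, ht.2⟩)
  have hIoo_mem : Set.Ioo a b ∈ 𝓝[<] b := Ioo_mem_nhdsLT_of_mem ⟨lt_trans ha hb, le_refl b⟩
  have hIoo_ev : ∀ᶠ t in 𝓝[<] b, t ∈ Set.Ioo a b := hIoo_mem
  have hLge : α₀ ≤ L := ge_of_tendsto hL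
    (by filter_upwards [hIoo_ev] with t ht; exact le_of_lt (hsol t ht).1)
  -- the vector field
  set f : ℝ × ℝ → ℝ × ℝ := fun p => (p.2, -(deriv V p.1)) with hfdef
  have hfC1 : ∀ p : ℝ × ℝ, α₀ < p.1 → ContDiffAt ℝ 1 f p := by
    intro p hp
    exact ContDiffAt.prodMk contDiffAt_snd
      (((hV'c1.contDiffAt (Ioi_mem_nhds hp)).comp p contDiffAt_fst).neg)
  -- KEY: the limit L equals α₀
  have hKEY : L = α₀ := by
    by_contra hne
    have hL' : α₀ < L := lt_of_le_of_ne hLge (Ne.symm hne)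
    have hVu'lim : Tendsto (fun t => deriv V (u t)) (𝓝[<] b) (𝓝 (deriv V L)) :=
      (hV'cont L hL').tendsto.comp hL
    have hbd : ∀ᶠ t in 𝓝[<] b, |(-(deriv V (u t)))| ≤ |deriv V L| + 1 := by
      have h1 : Tendsto (fun t => |deriv V (u t)|) (𝓝[<] b) (𝓝 (|deriv V L|)) := hVu'lim.abs
      filter_upwards [h1.eventually (eventually_le_nhds (lt_add_one _))] with t ht
      simpa [abs_neg] using ht
    obtain ⟨t3, ht3, hsub3⟩ := mem_nhdsLT_iff_exists_Ioo_subset.mp (hbd.and hIoo_ev)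
    obtain ⟨ℓ, hℓ⟩ : ∃ ℓ, Tendsto u' (𝓝[<] b) (𝓝 ℓ) :=
      exists_tendsto_of_hasDerivAt_bound ht3
        (g' := fun t => -(deriv V (u t)))
        (fun t ht => (hsol t (hsub3 ht).2).2.2)
        (fun t ht => (hsub3 ht).1)
    set p₀ : ℝ × ℝ := (L, ℓ) with hp₀def
    have hfp := hfC1 p₀ hL'
    obtain ⟨K, s, hs, hlip⟩ := hfp.exists_lipschitzOnWith
    set s' := interior s with hs'def
    have hs'o : IsOpen s' := isOpen_interior
    have hp₀s' : p₀ ∈ s' := mem_interior_iff_mem_nhds.mpr hs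
    have hlip' : LipschitzOnWith K f s' := hlip.mono interior_subset
    obtain ⟨γ, hγb, ε, hε, hγ⟩ := hfp.exists_forall_mem_closedBall_exists_eq_forall_mem_Ioo_hasDerivAt₀ b
    have hγcont : ∀ t ∈ Set.Ioo (b-ε) (b+ε), ContinuousAt γ t :=
      fun t ht => (hγ t ht).continuousAt
    set W := s' ∩ {p : ℝ × ℝ | α₀ < p.1} with hWdef
    have hWo : IsOpen W := hs'o.inter (isOpen_lt continuous_const continuous_fst)
    have hγbW : γ b ∈ W := by rw [hγb]; exact ⟨hp₀s', hL'⟩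
    have hcb : ContinuousAt γ b := hγcont b ⟨by linarith, by linarith⟩
    have hγnb : ∀ᶠ t in 𝓝 b, γ t ∈ W := hcb (hWo.mem_nhds hγbW)
    obtain ⟨ε₂, hε₂pos, hε₂⟩ := Metric.eventually_nhds_iff_ball.mp hγnb
    set ε₃ := min ε₂ ε with hε₃def
    have hε₃pos : 0 < ε₃ := lt_min hε₂pos hε
    have hε₃ε₂ : ε₃ ≤ ε₂ := min_le_left _ _
    have hε₃ε : ε₃ ≤ ε := min_le_right _ _
    -- extended curve
    set c : ℝ → ℝ × ℝ := fun t => if t < b then (u t, u' t) else p₀ with hcdef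
    have hcb' : c b = p₀ := by simp [hcdef]
    have hctend : Tendsto c (𝓝[<] b) (𝓝 p₀) := by
      have hpair : Tendsto (fun t => (u t, u' t)) (𝓝[<] b) (𝓝 p₀) := hL.prodMk_nhds hℓ
      apply hpair.congr'
      filter_upwards [self_mem_nhdsWithin] with t ht
      simp [hcdef, (mem_Iio.mp ht)]
    have hcurve : ∀ t ∈ Set.Ioo a b, HasDerivAt c (f (c t)) t := by
      intro t ht
      have hder : HasDerivAt (fun s => (u s, u' s)) (u' t, -(deriv V (u t))) t :=
        (hsol t ht).2.1.prodMk (hsol t ht).2.2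
      have heqc : c =ᶠ[𝓝 t] (fun s => (u s, u' s)) := by
        filter_upwards [Iio_mem_nhds ht.2] with s hs
        simp [hcdef, (mem_Iio.mp hs)]
      have hc1 : HasDerivAt c (u' t, -(deriv V (u t))) t := hder.congr_of_eventuallyEq heqc
      convert hc1 using 1
      simp [hfdef, hcdef, ht.2]
    have hcs' : ∀ᶠ t in 𝓝[<] b, c t ∈ s' := hctend (hs'o.mem_nhds hp₀s')
    obtain ⟨t5, ht5, hsub5⟩ := mem_nhdsLT_iff_exists_Ioo_subset.mp hcs'
    set l : ℝ := max (max a t5) (b - ε₃) with hldef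
    have hlb : l < b := by
      apply max_lt (max_lt (lt_trans ha hb) ht5) (by linarith)
    set l' := (l + b)/2 with hl'def
    have hl'1 : l < l' := by rw [hl'def]; linarith
    have hl'2 : l' < b := by rw [hl'def]; linarith
    have hl'a : a < l' := lt_of_le_of_lt (le_trans (le_max_left a t5) (le_max_left _ _)) hl'1
    have hl't5 : t5 < l' := lt_of_le_of_lt (le_trans (le_max_right a t5) (le_max_left _ _)) hl'1
    have hl'ε₃ : b - ε₃ < l' := lt_of_le_of_lt (le_max_right _ _) hl'1
    have hIccsub : ∀ t ∈ Set.Ico l' b, t ∈ Set.Ioo a b :=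
      fun t ht => ⟨lt_of_lt_of_le hl'a ht.1, ht.2⟩
    have hIccε : ∀ t ∈ Set.Icc l' b, t ∈ Set.Ioo (b-ε) (b+ε) := by
      intro t ht
      constructor
      · have : b - ε ≤ b - ε₃ := by linarith
        linarith [ht.1]
      · linarith [ht.2]
    have hcwb : ContinuousWithinAt c (Set.Iio b) b := by
      show Tendsto c (𝓝[<] b) (𝓝 (c b))
      rw [hcb']; exact hctend
    have hEqOn : Set.EqOn c γ (Set.Icc l' b) := by
      refine ODE_solution_unique_of_mem_Icc_left (v := fun _ => f) (s := fun _ => s')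
        (fun _ _ => hlip') ?_ ?_ ?_ ?_ ?_ ?_ ?_
      · -- ContinuousOn c (Icc l' b)
        intro t ht
        rcases eq_or_lt_of_le ht.2 with heq | hlt
        · rw [heq]
          exact (hcwb.insert.mono (by rw [Iio_insert]; exact Icc_subset_Iic_self))
        · exact (hcurve t (hIccsub t ⟨ht.1, hlt⟩)).continuousAt.continuousWithinAt
      · -- HasDerivWithinAt c
        intro t ht
        rcases eq_or_lt_of_le ht.2 with heq | hlt
        · subst heq
          have hdiff : DifferentiableOn ℝ c (Set.Ioo l' t) := fun z hz =>
            ((hcurve z (hIccsub z ⟨le_of_lt hz.1, hz.2⟩)).differentiableAt).differentiableWithinAt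
          have hclim : ContinuousWithinAt c (Set.Ioo l' t) t :=
            hcwb.mono Ioo_subset_Iio_self
          have hder' : Tendsto (fun x => deriv c x) (𝓝[<] t) (𝓝 (ℓ, -(deriv V L))) := by
            have hder2 : Tendsto (fun r => (u' r, -(deriv V (u r)))) (𝓝[<] t)
                (𝓝 (ℓ, -(deriv V L))) := hℓ.prodMk_nhds hVu'lim.neg
            apply hder2.congr'
            filter_upwards [hIoo_ev] with r hr
            have h1 := ((hcurve r hr).deriv).symm
            have h2 : c r = (u r, u' r) := by simp [hcdef, hr.2]
            rw [h2] at h1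
            simpa [hfdef] using h1
          have hkey := hasDerivWithinAt_Iic_of_tendsto_deriv hdiff hclim
            (Ioo_mem_nhdsLT_of_mem ⟨hl'2, le_refl t⟩) hder'
          convert hkey using 1
          rw [hcb']
        · exact ((hcurve t (hIccsub t ⟨le_of_lt ht.1, hlt⟩)).hasDerivWithinAt)
      · -- c stays in s'
        intro t ht
        rcases eq_or_lt_of_le ht.2 with heq | hlt
        · rw [heq, hcb']; exact hp₀s'
        · exact hsub5 ⟨lt_trans hl't5 ht.1, hlt⟩
      · -- ContinuousOn γ
        exact fun t ht => (hγcont t (hIccε t ht)).continuousWithinAt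
      · -- HasDerivWithinAt γ
        exact fun t ht => (hγ t (hIccε t ⟨le_of_lt ht.1, ht.2⟩)).hasDerivWithinAt
      · -- γ stays in s'
        intro t ht
        have : γ t ∈ W := by
          apply hε₂
          rw [Metric.mem_ball, Real.dist_eq, abs_lt]
          constructor
          · linarith [ht.1, hl'ε₃, hε₃ε₂]
          · linarith [ht.2, hε₂pos]
        exact this.1
      · rw [hcb', hγb]
    -- glue and contradict maximality
    set w : ℝ → ℝ := fun t => if t < b then u t else (γ t).1 with hwdef
    set w' : ℝ → ℝ := fun t => if t < b then u' t else (γ t).2 with hw'def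
    have hweq : ∀ t ∈ Set.Ioo l' (b + ε₃), w t = (γ t).1 ∧ w' t = (γ t).2 := by
      intro t ht
      by_cases htb : t < b
      · have hct := hEqOn ⟨le_of_lt ht.1, le_of_lt htb⟩
        have hct2 : c t = (u t, u' t) := by simp [hcdef, htb]
        rw [hct2] at hct
        constructor
        · simp only [hwdef, if_pos htb]; rw [← hct]
        · simp only [hw'def, if_pos htb]; rw [← hct]
      · constructor <;> simp [hwdef, hw'def, htb]
    have hsolw : ∀ t ∈ Set.Ioo a (b + ε₃),
        α₀ < w t ∧ HasDerivAt w (w' t) t ∧ HasDerivAt w' (-(deriv V (w t))) t := by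
      intro t ht
      by_cases htb : t < b
      · have ht' : t ∈ Set.Ioo a b := ⟨ht.1, htb⟩
        have hwu : w =ᶠ[𝓝 t] u := by
          filter_upwards [Iio_mem_nhds htb] with r hr
          simp [hwdef, (mem_Iio.mp hr)]
        have hw'u : w' =ᶠ[𝓝 t] u' := by
          filter_upwards [Iio_mem_nhds htb] with r hr
          simp [hw'def, (mem_Iio.mp hr)]
        refine ⟨?_, ?_, ?_⟩
        · have hv : w t = u t := by simp [hwdef, htb]
          rw [hv]; exact (hsol t ht').1
        · have hv : w' t = u' t := by simp [hw'def, htb]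
          rw [hv]; exact (hsol t ht').2.1.congr_of_eventuallyEq hwu
        · have hv : w t = u t := by simp [hwdef, htb]
          rw [hv]; exact (hsol t ht').2.2.congr_of_eventuallyEq hw'u
      · push_neg at htb
        have htI : t ∈ Set.Ioo l' (b + ε₃) := ⟨lt_of_lt_of_le hl'2 htb, ht.2⟩
        have htε : t ∈ Set.Ioo (b - ε) (b + ε) :=
          ⟨by linarith, lt_of_lt_of_le ht.2 (by linarith)⟩
        have hγt := hγ t htε
        have hγ1 : HasDerivAt (fun r => (γ r).1) ((γ t).2) t := by
          have hcomp := (ContinuousLinearMap.fst ℝ ℝ ℝ).hasFDerivAt.comp_hasDerivAt t hγt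
          simp [hfdef] at hcomp; exact hcomp
        have hγ2 : HasDerivAt (fun r => (γ r).2) (-(deriv V ((γ t).1))) t := by
          have hcomp := (ContinuousLinearMap.snd ℝ ℝ ℝ).hasFDerivAt.comp_hasDerivAt t hγt
          simp [hfdef] at hcomp; exact hcomp
        have hwγ : w =ᶠ[𝓝 t] (fun r => (γ r).1) := by
          filter_upwards [isOpen_Ioo.mem_nhds htI] with r hr
          exact (hweq r hr).1
        have hw'γ : w' =ᶠ[𝓝 t] (fun r => (γ r).2) := by
          filter_upwards [isOpen_Ioo.mem_nhds htI] with r hr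
          exact (hweq r hr).2
        have hWt : γ t ∈ W := by
          apply hε₂
          rw [Metric.mem_ball, Real.dist_eq, abs_lt]
          exact ⟨by linarith, by linarith [ht.2, hε₃ε₂]⟩
        refine ⟨?_, ?_, ?_⟩
        · rw [(hweq t htI).1]; exact hWt.2
        · rw [(hweq t htI).2]
          exact hγ1.congr_of_eventuallyEq hwγ
        · rw [(hweq t htI).1]
          exact hγ2.congr_of_eventuallyEq hw'γ

    have hfin := hmax a (b + ε₃) w w' le_rfl (by linarith) hsolw
      (fun t ht => by simp [hwdef, ht.2])
    linarith [hfin.2]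
  have hulim : Tendsto u (𝓝[<] b) (𝓝 α₀) := hKEY ▸ hL
  have hVulim : Tendsto (fun t => V (u t)) (𝓝[<] b) (𝓝 hstar) := by
    apply hVlim.comp
    apply tendsto_nhdsWithin_of_tendsto_nhds_of_eventually_within u hulim
    filter_upwards [hIoo_ev] with t ht
    exact (hsol t ht).1
  have hsqlim : Tendsto (fun t => (u' t)^2) (𝓝[<] b) (𝓝 (2*(h - hstar))) := by
    have h1 : Tendsto (fun t => 2*(h - V (u t))) (𝓝[<] b) (𝓝 (2*(h - hstar))) :=
      (tendsto_const_nhds.sub hVulim).const_mul 2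
    apply h1.congr'
    filter_upwards [hIoo_ev] with t ht
    exact (hu'sq t ht).symm
  set v₁ : ℝ := -Real.sqrt (2*(h - hstar)) with hv₁def
  have hu'lim : Tendsto u' (𝓝[<] b) (𝓝 v₁) := by
    rcases eq_or_lt_of_le hh with hcase | hcase
    · -- h = hstar
      have hz : v₁ = 0 := by rw [hv₁def, ← hcase]; simp
      rw [hz, tendsto_zero_iff_abs_tendsto_zero]
      have h1 : Tendsto (fun t => Real.sqrt ((u' t)^2)) (𝓝[<] b)
          (𝓝 (Real.sqrt (2*(h - hstar)))) := hsqlim.sqrt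
      have h2 : Real.sqrt (2*(h-hstar)) = 0 := by rw [← hcase]; simp
      rw [h2] at h1
      exact h1.congr (fun t => Real.sqrt_sq_eq_abs _)
    · -- hstar < h
      have hev : ∀ᶠ t in 𝓝[<] b, (2*(h-hstar))/2 < (u' t)^2 :=
        hsqlim.eventually (eventually_gt_nhds (by linarith))
      obtain ⟨t1, ht1, hsub1⟩ := mem_nhdsLT_iff_exists_Ioo_subset.mp (hev.and hIoo_ev)
      have hne : ∀ t ∈ Set.Ioo t1 b, u' t ≠ 0 := by
        intro t ht h0
        have h1 := (hsub1 ht).1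
        rw [h0] at h1
        simp at h1
        linarith
      have hneg : ∀ t ∈ Set.Ioo t1 b, u' t < 0 := by
        intro t ht
        rcases lt_or_gt_of_ne (hne t ht) with h0 | h0
        · exact h0
        exfalso
        have htab : t ∈ Set.Ioo a b := (hsub1 ht).2
        have hpos : ∀ r ∈ Set.Ico t b, 0 < u' r := by
          intro r hr
          rcases lt_trichotomy (u' r) 0 with hr0 | hr0 | hr0
          · exfalso
            have hcont : ContinuousOn u' (Set.Icc t r) := by
              intro z hz
              have hzab : z ∈ Set.Ioo a b :=
                ⟨lt_of_lt_of_le htab.1 hz.1, lt_of_le_of_lt hz.2 hr.2⟩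
              exact (hsol z hzab).2.2.continuousAt.continuousWithinAt
            have hIVT := intermediate_value_Icc' hr.1 hcont
            have h0mem : (0:ℝ) ∈ Set.Icc (u' r) (u' t) := ⟨le_of_lt hr0, le_of_lt h0⟩
            obtain ⟨z, hz, hz0⟩ := hIVT h0mem
            have hzI : z ∈ Set.Ioo t1 b := ⟨lt_of_lt_of_le ht.1 hz.1, lt_of_le_of_lt hz.2 hr.2⟩
            exact hne z hzI hz0
          · exact absurd hr0 (hne r ⟨lt_of_lt_of_le ht.1 hr.1, hr.2⟩)
          · exact hr0
        have hmono : StrictMonoOn u (Set.Ico t b) := by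
          apply strictMonoOn_of_deriv_pos (convex_Ico t b)
          · intro z hz
            have hzab : z ∈ Set.Ioo a b := ⟨lt_of_lt_of_le htab.1 hz.1, hz.2⟩
            exact (hsol z hzab).2.1.continuousAt.continuousWithinAt
          · intro z hz
            rw [interior_Ico] at hz
            have hzab : z ∈ Set.Ioo a b := ⟨lt_trans htab.1 hz.1, hz.2⟩
            rw [(hsol z hzab).2.1.deriv]
            exact hpos z (Set.Ioo_subset_Ico_self hz)
        have hmmem : (t + b)/2 ∈ Set.Ico t b := ⟨by linarith [ht.2], by linarith [ht.2]⟩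
        have hgeb : ∀ᶠ r in 𝓝[<] b, u ((t+b)/2) ≤ u r := by
          filter_upwards [Ioo_mem_nhdsLT_of_mem
            (⟨(by linarith [ht.2] : (t+b)/2 < b), le_refl b⟩ : b ∈ Set.Ioc ((t+b)/2) b)]
            with r hr
          exact le_of_lt (hmono hmmem ⟨by linarith [hr.1, ht.2], hr.2⟩ hr.1)
        have hfin := ge_of_tendsto hulim hgeb
        have hgt := (hsol ((t+b)/2)
          ⟨lt_of_lt_of_le htab.1 hmmem.1, hmmem.2⟩).1
        linarith
      have h1 : Tendsto (fun t => -Real.sqrt ((u' t)^2)) (𝓝[<] b) (𝓝 v₁) := hsqlim.sqrt.neg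
      apply h1.congr'
      filter_upwards [Ioo_mem_nhdsLT_of_mem ⟨ht1, le_refl b⟩] with t ht
      rw [Real.sqrt_sq_eq_abs, abs_of_neg (hneg t ht), neg_neg]
  -- symmetry: u is even
  have hJsub1 : Set.Ioo (max a (-b)) (min b (-a)) ⊆ Set.Ioo a b := fun t ht =>
    ⟨lt_of_le_of_lt (le_max_left _ _) ht.1, lt_of_lt_of_le ht.2 (min_le_left _ _)⟩
  have hJsub2 : ∀ t ∈ Set.Ioo (max a (-b)) (min b (-a)), -t ∈ Set.Ioo a b := by
    intro t ht
    have h1 := lt_of_lt_of_le ht.2 (min_le_right _ _)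
    have h2 := lt_of_le_of_lt (le_max_right a (-b)) ht.1
    constructor <;> linarith
  have heven : ∀ t ∈ Set.Ioo (max a (-b)) (min b (-a)),
      u t = u (-t) ∧ u' t = -(u' (-t)) := by
    have hγJ : ∀ t ∈ Set.Ioo (max a (-b)) (min b (-a)),
        HasDerivAt (fun r => (u r, u' r)) (f (u t, u' t)) t ∧
          ((u t, u' t) : ℝ × ℝ) ∈ {p : ℝ × ℝ | α₀ < p.1} := by
      intro t ht
      have h1 := hsol t (hJsub1 ht)
      exact ⟨h1.2.1.prodMk h1.2.2, h1.1⟩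
    have hηJ : ∀ t ∈ Set.Ioo (max a (-b)) (min b (-a)),
        HasDerivAt (fun r => (u (-r), -(u' (-r)))) (f (u (-t), -(u' (-t)))) t ∧
          ((u (-t), -(u' (-t))) : ℝ × ℝ) ∈ {p : ℝ × ℝ | α₀ < p.1} := by
      intro t ht
      have h1 := hsol (-t) (hJsub2 t ht)
      have hd1 : HasDerivAt (fun s => u (-s)) (-(u' (-t))) t := by
        have := h1.2.1.comp t (hasDerivAt_neg t)
        exact this.congr_deriv (by ring)
      have hd2 : HasDerivAt (fun s => -(u' (-s))) (-(deriv V (u (-t)))) t := by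
        have := (h1.2.2.comp t (hasDerivAt_neg t)).neg
        exact this.congr_deriv (by ring)
      exact ⟨hd1.prodMk hd2, h1.1⟩
    have h0J : (0:ℝ) ∈ Set.Ioo (max a (-b)) (min b (-a)) :=
      ⟨max_lt ha (by linarith), lt_min hb (by linarith)⟩
    have heq0 : ((u 0, u' 0) : ℝ × ℝ) = (u (-0), -(u' (-0))) := by
      simp [hinit]
    have hEq := ODE_eqOn_of_local (Ω := {p : ℝ × ℝ | α₀ < p.1})
      (fun p hp => hfC1 p hp) isOpen_Ioo isPreconnected_Ioo hγJ hηJ h0J heq0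
    intro t ht
    have h1 := hEq ht
    exact ⟨congrArg Prod.fst h1, congrArg Prod.snd h1⟩
  -- a = -b via maximality
  have hab : a = -b := by
    set v : ℝ → ℝ := fun t => if t ∈ Set.Ioo a b then u t else u (-t) with hvdef
    set v' : ℝ → ℝ := fun t => if t ∈ Set.Ioo a b then u' t else -(u' (-t)) with hv'def
    have hvu : ∀ t ∈ Set.Ioo a b, v t = u t := fun t ht => if_pos ht
    have hv'u : ∀ t ∈ Set.Ioo a b, v' t = u' t := fun t ht => if_pos ht
    have hvref : ∀ t ∈ Set.Ioo (-b) (-a), v t = u (-t) := by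
      intro t ht
      by_cases htm : t ∈ Set.Ioo a b
      · rw [hvu t htm]
        exact (heven t ⟨max_lt htm.1 ht.1, lt_min htm.2 ht.2⟩).1
      · simp only [hvdef]
        rw [if_neg htm]
    have hv'ref : ∀ t ∈ Set.Ioo (-b) (-a), v' t = -(u' (-t)) := by
      intro t ht
      by_cases htm : t ∈ Set.Ioo a b
      · rw [hv'u t htm]
        exact (heven t ⟨max_lt htm.1 ht.1, lt_min htm.2 ht.2⟩).2
      · simp only [hv'def]
        rw [if_neg htm]
    have hcover : ∀ t ∈ Set.Ioo (min a (-b)) (max b (-a)),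
        t ∈ Set.Ioo a b ∨ t ∈ Set.Ioo (-b) (-a) := by
      intro t ht
      by_cases h1 : t ∈ Set.Ioo a b
      · exact Or.inl h1
      right
      rw [Set.mem_Ioo] at h1
      rcases not_and_or.mp h1 with h2 | h2
      · push_neg at h2
        constructor
        · by_contra h3
          push_neg at h3
          have h4 : t ≤ min a (-b) := le_min h2 h3
          linarith [ht.1]
        · linarith
      · push_neg at h2
        constructor
        · linarith
        · by_contra h3
          push_neg at h3
          have h4 : max b (-a) ≤ t := max_le h2 h3
          linarith [ht.2]
    have hsolv : ∀ t ∈ Set.Ioo (min a (-b)) (max b (-a)),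
        α₀ < v t ∧ HasDerivAt v (v' t) t ∧ HasDerivAt v' (-(deriv V (v t))) t := by
      intro t ht
      rcases hcover t ht with hcase | hcase
      · have hvev : v =ᶠ[𝓝 t] u := by
          filter_upwards [isOpen_Ioo.mem_nhds hcase] with r hr
          exact hvu r hr
        have hv'ev : v' =ᶠ[𝓝 t] u' := by
          filter_upwards [isOpen_Ioo.mem_nhds hcase] with r hr
          exact hv'u r hr
        refine ⟨?_, ?_, ?_⟩
        · rw [hvu t hcase]; exact (hsol t hcase).1
        · rw [hv'u t hcase]; exact (hsol t hcase).2.1.congr_of_eventuallyEq hvev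
        · rw [hvu t hcase]; exact (hsol t hcase).2.2.congr_of_eventuallyEq hv'ev
      · have h1 := hsol (-t) (by
          constructor
          · linarith [hcase.2]
          · linarith [hcase.1])
        have hd1 : HasDerivAt (fun s => u (-s)) (-(u' (-t))) t := by
          have := h1.2.1.comp t (hasDerivAt_neg t)
          exact this.congr_deriv (by ring)
        have hd2 : HasDerivAt (fun s => -(u' (-s))) (-(deriv V (u (-t)))) t := by
          have := (h1.2.2.comp t (hasDerivAt_neg t)).neg
          exact this.congr_deriv (by ring)
        have hvev : v =ᶠ[𝓝 t] (fun s => u (-s)) := by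
          filter_upwards [isOpen_Ioo.mem_nhds hcase] with r hr
          exact hvref r hr
        have hv'ev : v' =ᶠ[𝓝 t] (fun s => -(u' (-s))) := by
          filter_upwards [isOpen_Ioo.mem_nhds hcase] with r hr
          exact hv'ref r hr
        refine ⟨?_, ?_, ?_⟩
        · rw [hvref t hcase]; exact h1.1
        · rw [hv'ref t hcase]; exact hd1.congr_of_eventuallyEq hvev
        · rw [hvref t hcase]; exact hd2.congr_of_eventuallyEq hv'ev
    have hfin := hmax (min a (-b)) (max b (-a)) v v' (min_le_left _ _) (le_max_left _ _)
      hsolv hvu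
    have h3 : a ≤ -b := min_eq_left_iff.mp hfin.1
    have h4 : -a ≤ b := max_eq_left_iff.mp hfin.2
    linarith
  -- final assembly
  subst hab
  have hnegmap : Tendsto (fun t : ℝ => -t) (𝓝[>] (-b)) (𝓝[<] b) := by
    apply tendsto_nhdsWithin_of_tendsto_nhds_of_eventually_within
    · have h1 : Tendsto (fun t : ℝ => -t) (𝓝 (-b)) (𝓝 b) := by
        simpa using continuous_neg.tendsto (-b)
      exact h1.mono_left nhdsWithin_le_nhds
    · filter_upwards [self_mem_nhdsWithin] with t ht
      simp only [Set.mem_Iio]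
      have := Set.mem_Ioi.mp ht
      linarith
  have hIooL : Set.Ioo (-b) b ∈ 𝓝[>] (-b) :=
    Ioo_mem_nhdsGT_of_mem ⟨le_refl _, by linarith⟩
  have hevenb : ∀ t ∈ Set.Ioo (-b) b, u t = u (-t) ∧ u' t = -(u' (-t)) := by
    intro t ht
    apply heven
    simp only [max_self, neg_neg, min_self]
    exact ht
  refine ⟨b, hb, rfl, rfl, hulim, ?_, ⟨v₁, hu'lim, ?_⟩⟩
  · have hcomp : Tendsto (fun t => u (-t)) (𝓝[>] (-b)) (𝓝 α₀) := hulim.comp hnegmap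
    apply hcomp.congr'
    filter_upwards [hIooL] with t ht
    exact ((hevenb t ht).1).symm
  · have hcomp : Tendsto (fun t => -(u' (-t))) (𝓝[>] (-b)) (𝓝 (-v₁)) :=
      (hu'lim.comp hnegmap).neg
    apply hcomp.congr'
    filter_upwards [hIooL] with t ht
    exact ((hevenb t ht).2).symm
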